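/- There is no (2+1)-color connected colored edge graph G(V,E,C,f) with |V| ≤ 5 and |C| = 3. -/

import Mathlib

open SimpleGraph

private lemma aux_pre {V : Type*} {G : SimpleGraph V} {v w : V}
    (hr : (G \ SimpleGraph.fromEdgeSet {s(v, w)}).Reachable v w) (hG : G.Preconnected) :
    (G \ SimpleGraph.fromEdgeSet {s(v, w)}).Preconnected := by
  intro a b
  obtain ⟨p⟩ := hG a b
  induction p with
  | nil => exact Reachable.refl _
  | @cons x y z h p ih =>
    refine Reachable.trans ?_ ih
    by_cases he : s(x, y) = s(v, w)
    · rw [Sym2.eq_iff] at he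
      rcases he with ⟨rfl, rfl⟩ | ⟨rfl, rfl⟩
      · exact hr
      · exact hr.symm
    · refine Adj.reachable ?_
      simp only [sdiff_adj, fromEdgeSet_adj, Set.mem_singleton_iff]
      exact ⟨h, fun hc => he hc.1⟩

private lemma aux_card (k : ℕ) : ∀ {n : ℕ} (G : SimpleGraph (Fin n)),
    G.edgeSet.ncard = k → G.Connected → n ≤ k + 1 := by
  induction k using Nat.strong_induction_on with
  | _ k IH =>
    intro n G hk hG
    classical
    by_cases hac : G.IsAcyclic
    · haveI : Fintype G.edgeSet := Fintype.ofFinite _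
      have ht : G.IsTree := ⟨hG, hac⟩
      have := ht.card_edgeFinset
      rw [Fintype.card_fin] at this
      rw [Set.ncard_eq_toFinset_card'] at hk
      rw [← this]
      have : G.edgeFinset.card = G.edgeSet.toFinset.card := by
        congr 1
      omega
    · rw [isAcyclic_iff_forall_edge_isBridge] at hac
      push_neg at hac
      obtain ⟨e, he, hnb⟩ := hac
      induction e with
      | _ v w =>
        rw [SimpleGraph.isBridge_iff] at hnb
        rw [SimpleGraph.mem_edgeSet] at he
        have hr : (G \ SimpleGraph.fromEdgeSet {s(v, w)}).Reachable v w := by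
          by_contra hc
          exact hnb hc
        set G' := G \ SimpleGraph.fromEdgeSet {s(v, w)} with hG'
        have hE : G'.edgeSet = G.edgeSet \ {s(v, w)} := by
          simp [hG']
        have hmem : s(v, w) ∈ G.edgeSet := he
        have hfin : G.edgeSet.Finite := Set.toFinite _
        have hk1 : 1 ≤ k := by
          rw [← hk]
          exact (Set.ncard_pos hfin).2 ⟨_, hmem⟩ 
        have hcard' : G'.edgeSet.ncard = k - 1 := by
          rw [hE, Set.ncard_diff_singleton_of_mem hmem, hk]
        haveI := hG.nonempty
        have hG'conn : G'.Connected := SimpleGraph.Connected.mk (aux_pre hr hG.preconnected)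
        have := IH (k - 1) (by omega) G' hcard' hG'conn
        omega

/-- There is no `(2+1)`-color connected colored edge graph with
`|V| ≤ 5` and `|C| = 3`. -/
theorem stmt_9 (n : ℕ) (hn : n ≤ 5) :
    ¬ ∃ (G : SimpleGraph (Fin n)) (f : Sym2 (Fin n) → Fin 3),
        (∀ c : Fin 3, ∃ e ∈ G.edgeSet, f e = c) ∧
        ∀ Ct : Finset (Fin 3), Ct.card = 2 →
          ∀ A B : Fin n, (G.deleteEdges (f ⁻¹' ↑Ct)).Reachable A B := by
  rintro ⟨G, f, hsurj, hconn⟩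
  classical
  -- n ≥ 2 since G has an edge
  obtain ⟨e, he, -⟩ := hsurj 0
  have hn2 : 2 ≤ n := by
    induction e with
    | _ a b =>
      rw [SimpleGraph.mem_edgeSet] at he
      have : a ≠ b := G.ne_of_adj he
      have : Nontrivial (Fin n) := ⟨a, b, this⟩
      have := Fintype.one_lt_card (α := Fin n)
      simp at this
      omega
  -- for each color c, the graph with only c-colored edges is connected
  set H : Fin 3 → SimpleGraph (Fin n) := fun c => G.deleteEdges (f ⁻¹' ↑(({c}ᶜ : Finset (Fin 3))))
  have hHconn : ∀ c, (H c).Connected := by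
    intro c
    have hcard : ({c}ᶜ : Finset (Fin 3)).card = 2 := by
      rw [Finset.card_compl]
      simp
    haveI : Nonempty (Fin n) := ⟨⟨0, by omega⟩⟩
    exact SimpleGraph.Connected.mk (fun a b => hconn _ hcard a b)
  have hHedge : ∀ c, (H c).edgeSet = {e ∈ G.edgeSet | f e = c} := by
    intro c
    ext e
    simp only [H, SimpleGraph.edgeSet_deleteEdges, Set.mem_diff, Set.mem_preimage,
      Finset.coe_compl, Finset.coe_singleton, Set.mem_compl_iff, Set.mem_singleton_iff,
      Set.mem_setOf_eq, not_not]
  have hHcard : ∀ c, n ≤ (H c).edgeSet.ncard + 1 := fun c =>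
    aux_card _ (H c) rfl (hHconn c)
  -- the three edge sets are disjoint subsets of G.edgeSet
  have hfin : ∀ c : Fin 3, (H c).edgeSet.Finite := fun c => Set.toFinite _
  have hdisj : ∀ c d : Fin 3, c ≠ d → Disjoint ((H c).edgeSet) ((H d).edgeSet) := by
    intro c d hcd
    rw [Set.disjoint_left]
    intro e hec hed
    rw [hHedge] at hec hed
    exact hcd (hec.2 ▸ hed.2 ▸ rfl)
  have hsub : (H 0).edgeSet ∪ (H 1).edgeSet ∪ (H 2).edgeSet ⊆ G.edgeSet := by
    intro e he
    rcases he with (he | he) | he <;> exact ((hHedge _ ▸ he).1)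
  have hunion : ((H 0).edgeSet ∪ (H 1).edgeSet ∪ (H 2).edgeSet).ncard
      = (H 0).edgeSet.ncard + (H 1).edgeSet.ncard + (H 2).edgeSet.ncard := by
    rw [Set.ncard_union_eq (by
        refine Set.disjoint_union_left.2 ⟨hdisj 0 2 (by decide), hdisj 1 2 (by decide)⟩)
      ((hfin 0).union (hfin 1)) (hfin 2),
      Set.ncard_union_eq (hdisj 0 1 (by decide)) (hfin 0) (hfin 1)]
  have hle : ((H 0).edgeSet ∪ (H 1).edgeSet ∪ (H 2).edgeSet).ncard ≤ G.edgeSet.ncard :=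
    Set.ncard_le_ncard hsub (Set.toFinite _)
  have hGbound : G.edgeSet.ncard ≤ n.choose 2 := by
    haveI : Fintype G.edgeSet := Fintype.ofFinite _
    have := G.card_edgeFinset_le_card_choose_two
    rw [Fintype.card_fin] at this
    rw [Set.ncard_eq_toFinset_card']
    have h2 : G.edgeFinset.card = G.edgeSet.toFinset.card := by congr 1
    omega
  have h0 := hHcard 0
  have h1 := hHcard 1
  have h2 := hHcard 2
  have e2 : (2:ℕ).choose 2 = 1 := by decide
  have e3 : (3:ℕ).choose 2 = 3 := by decide
  have e4 : (4:ℕ).choose 2 = 6 := by decide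
  have e5 : (5:ℕ).choose 2 = 10 := by decide
  interval_cases n <;> omega
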